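/- Let F = {f₁,...,f_s} ⊆ K[x₁,...,x_m] be nonzero polynomials with deg(f_i) ≤ d, and let ⟨LT(B₀)⟩ ⊊ ⟨LT(B₁)⟩ ⊊ ... ⊊ ⟨LT(B_r)⟩ be the strictly ascending chain of leading-term ideals arising from Buchberger's algorithm, terminating when B_r is a Gröbner basis of ⟨F⟩. Then r + 1 ≤ B(m, n ↦ 3ⁿ·d), where B is any function with the bounding property for antichains in ℕ^m. -/

import Mathlib

open MvPolynomial
open scoped Classical

/-- The leading monomial (exponent vector) of a polynomial with respect to a
monomial order `ord`; `lmon ord 0 = 0` by convention. -/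
noncomputable def lmon {K : Type*} [Field K] {m : ℕ}
    (ord : LinearOrder (Fin m →₀ ℕ)) (f : MvPolynomial (Fin m) K) : Fin m →₀ ℕ :=
  if h : f = 0 then 0 else
    @Finset.max' _ ord f.support (MvPolynomial.support_nonempty.mpr h)

/-- The S-polynomial S(f,g) = (x^γ/lt(f))·f − (x^γ/lt(g))·g, where
x^γ = lcm(lm f, lm g), i.e. γ = lm f ⊔ lm g (componentwise max). -/
noncomputable def spoly {K : Type*} [Field K] {m : ℕ}
    (ord : LinearOrder (Fin m →₀ ℕ)) (f g : MvPolynomial (Fin m) K) :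
    MvPolynomial (Fin m) K :=
  (monomial ((lmon ord f ⊔ lmon ord g) - lmon ord f)) (f.coeff (lmon ord f))⁻¹ * f -
    (monomial ((lmon ord f ⊔ lmon ord g) - lmon ord g)) (g.coeff (lmon ord g))⁻¹ * g

/-- `IsRemainder ord f B r`: `r` is a possible remainder of `f` on multivariate
division by the finite set `B`: `f = Σ_{g ∈ B} a_g g + r` with
`lm(a_g g) ≼ lm f` for all nonzero summands, and `r` reduced modulo `B`
(no leading monomial of an element of `B` divides a monomial of `r`). -/
def IsRemainder {K : Type*} [Field K] {m : ℕ}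
    (ord : LinearOrder (Fin m →₀ ℕ)) (f : MvPolynomial (Fin m) K)
    (B : Finset (MvPolynomial (Fin m) K)) (r : MvPolynomial (Fin m) K) : Prop :=
  ∃ a : MvPolynomial (Fin m) K → MvPolynomial (Fin m) K,
    f = (∑ g ∈ B, a g * g) + r ∧
    (∀ g ∈ B, a g * g ≠ 0 → ord.le (lmon ord (a g * g)) (lmon ord f)) ∧
    (∀ g ∈ B, g ≠ 0 → ∀ β ∈ r.support, ¬ lmon ord g ≤ β)

/-- The ideal generated by the leading terms of the elements of a finite set. -/
noncomputable def ltIdeal {K : Type*} [Field K] {m : ℕ}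
    (ord : LinearOrder (Fin m →₀ ℕ)) (B : Finset (MvPolynomial (Fin m) K)) :
    Ideal (MvPolynomial (Fin m) K) :=
  Ideal.span ((fun b : MvPolynomial (Fin m) K =>
    (monomial (lmon ord b)) (b.coeff (lmon ord b))) '' (B : Set (MvPolynomial (Fin m) K)))

section Aux

variable {K : Type*} [Field K] {m : ℕ} (ord : LinearOrder (Fin m →₀ ℕ))

lemma lmon_mem_support {f : MvPolynomial (Fin m) K} (hf : f ≠ 0) :
    lmon ord f ∈ f.support := by
  rw [lmon, dif_neg hf]
  exact @Finset.max'_mem _ ord _ _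

lemma le_lmon {f : MvPolynomial (Fin m) K} {s : Fin m →₀ ℕ} (hs : s ∈ f.support) :
    ord.le s (lmon ord f) := by
  have hf : f ≠ 0 := by rintro rfl; simp at hs
  rw [lmon, dif_neg hf]
  exact @Finset.le_max' _ ord _ _ hs

lemma finsupp_sum_eq (s : Fin m →₀ ℕ) : (s.sum fun _ e => e) = ∑ x, s x :=
  Finsupp.sum_fintype _ _ (fun _ => rfl)

lemma sum_lmon_le (f : MvPolynomial (Fin m) K) :
    (∑ x, lmon ord f x) ≤ f.totalDegree := by
  by_cases hf : f = 0
  · simp [hf, lmon]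
  · rw [← finsupp_sum_eq]
    exact MvPolynomial.le_totalDegree (lmon_mem_support ord hf)

lemma totalDegree_le_sum_lmon
    (hgraded : ∀ a b : Fin m →₀ ℕ, ord.le a b → (∑ x, a x) ≤ ∑ x, b x)
    (f : MvPolynomial (Fin m) K) :
    f.totalDegree ≤ ∑ x, lmon ord f x := by
  rw [MvPolynomial.totalDegree]
  apply Finset.sup_le
  intro s hs
  rw [finsupp_sum_eq]
  exact hgraded _ _ (le_lmon ord hs)

lemma totalDegree_spoly_le (p q : MvPolynomial (Fin m) K) :
    (spoly ord p q).totalDegree ≤ p.totalDegree + q.totalDegree := by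
  have key : ∀ (s : Fin m →₀ ℕ) (c : K) (f : MvPolynomial (Fin m) K),
      ((MvPolynomial.monomial s) c * f).totalDegree ≤ (∑ x, s x) + f.totalDegree := by
    intro s c f
    refine (MvPolynomial.totalDegree_mul _ _).trans (add_le_add ?_ le_rfl)
    refine (MvPolynomial.totalDegree_monomial_le s c).trans ?_
    rw [← finsupp_sum_eq]
    exact le_rfl
  have hsub : ∀ α β : Fin m →₀ ℕ, (∑ x, ((α ⊔ β) - α) x) ≤ ∑ x, β x := by
    intro α β
    apply Finset.sum_le_sum
    intro x _
    rw [Finsupp.tsub_apply, Finsupp.sup_apply]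
    omega
  rw [spoly]
  refine (MvPolynomial.totalDegree_sub _ _).trans (max_le ?_ ?_)
  · refine (key _ _ _).trans ?_
    have := hsub (lmon ord p) (lmon ord q)
    have := (sum_lmon_le ord q)
    omega
  · refine (key _ _ _).trans ?_
    have h1 : (∑ x, ((lmon ord p ⊔ lmon ord q) - lmon ord q) x) ≤ ∑ x, lmon ord p x := by
      have := hsub (lmon ord q) (lmon ord p)
      refine le_trans (le_of_eq ?_) this
      congr 1
      ext x
      rw [sup_comm]
    have := sum_lmon_le ord p
    omega

lemma remainder_totalDegree_le
    (hgraded : ∀ a b : Fin m →₀ ℕ, ord.le a b → (∑ x, a x) ≤ ∑ x, b x)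
    {f b : MvPolynomial (Fin m) K} {Bn : Finset (MvPolynomial (Fin m) K)}
    (h : IsRemainder ord f Bn b) :
    b.totalDegree ≤ f.totalDegree := by
  obtain ⟨a, heq, hle, -⟩ := h
  have hb : b = f - ∑ g ∈ Bn, a g * g := by rw [heq]; ring
  have hterm : ∀ g ∈ Bn, (a g * g).totalDegree ≤ f.totalDegree := by
    intro g hg
    by_cases h0 : a g * g = 0
    · simp [h0]
    · calc (a g * g).totalDegree ≤ ∑ x, lmon ord (a g * g) x :=
            totalDegree_le_sum_lmon ord hgraded _
        _ ≤ ∑ x, lmon ord f x := hgraded _ _ (hle g hg h0)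
        _ ≤ f.totalDegree := sum_lmon_le ord f
  rw [hb]
  exact (MvPolynomial.totalDegree_sub _ _).trans
    (max_le le_rfl (MvPolynomial.totalDegree_finsetSum_le hterm))

end Aux

/- STATEMENT 15 (Corollary 4.4): if ⟨LT(B₀)⟩ ⊊ ... ⊊ ⟨LT(B_r)⟩ is the chain of
leading-term ideals from Buchberger's algorithm (graded order, deg f_i ≤ d), B_r being
a Gröbner basis of ⟨F⟩, and Bd has the bounding property for antichains in ℕ^m, then
r + 1 ≤ Bd(m, n ↦ 3ⁿ·d). -/
theorem stmt_15 {K : Type*} [Field K] (m : ℕ) (hm : 1 ≤ m)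
    (ord : LinearOrder (Fin m →₀ ℕ))
    (hzero : ∀ a : Fin m →₀ ℕ, ord.le 0 a)
    (hadd : ∀ a b c : Fin m →₀ ℕ, ord.le a b → ord.le (a + c) (b + c))
    (hgraded : ∀ a b : Fin m →₀ ℕ, ord.le a b → (∑ x, a x) ≤ ∑ x, b x)
    (d : ℕ) (hd : 1 ≤ d)
    (F : Finset (MvPolynomial (Fin m) K)) (hF0 : (0 : MvPolynomial (Fin m) K) ∉ F)
    (hFd : ∀ g ∈ F, g.totalDegree ≤ d)
    (B : ℕ → Finset (MvPolynomial (Fin m) K))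
    (hB0 : B 0 = F)
    (hstep : ∀ (n : ℕ) (b : MvPolynomial (Fin m) K),
      b ∈ B (n + 1) ↔ b ∈ B n ∨
        (b ≠ 0 ∧ ∃ p ∈ B n, ∃ q ∈ B n, IsRemainder ord (spoly ord p q) (B n) b))
    (r : ℕ)
    -- the chain ⟨LT(B₀)⟩ ⊊ ⟨LT(B₁)⟩ ⊊ ... ⊊ ⟨LT(B_r)⟩ is strictly ascending
    (hstrict : ∀ n < r, ltIdeal ord (B n) < ltIdeal ord (B (n + 1)))
    -- B_r is a Gröbner basis of ⟨F⟩: it is contained in ⟨F⟩ and the leading monomial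
    -- of every nonzero element of ⟨F⟩ is divisible by some lm(g), g ∈ B_r
    (hGB : (↑(B r) : Set (MvPolynomial (Fin m) K)) ⊆
        (Ideal.span (F : Set (MvPolynomial (Fin m) K)) : Set (MvPolynomial (Fin m) K)) ∧
      ∀ p ∈ Ideal.span (F : Set (MvPolynomial (Fin m) K)), p ≠ 0 →
        ∃ g ∈ B r, g ≠ 0 ∧ lmon ord g ≤ lmon ord p)
    -- Bd has the bounding property for antichains in ℕ^m
    (Bd : ℕ → (ℕ → ℕ) → ℕ)
    (hBd : ∀ h : ℕ → ℕ, (∀ n, 1 ≤ h n) → Monotone h →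
      ∀ (u : ℕ) (γ : Fin u → (Fin m → ℕ)),
        (∀ i j : Fin u, i < j → ¬ γ i ≤ γ j) →
        (∀ i : Fin u, (∑ k, γ i k) ≤ h (i.1 + 1)) →
        u ≤ Bd m h) :
    r + 1 ≤ Bd m (fun n => 3 ^ n * d) := by
  -- Basic facts about the chain B
  have hmono : Monotone B := monotone_nat_of_le_succ fun n b hb => (hstep n b).mpr (Or.inl hb)
  have hdeg : ∀ n, ∀ b ∈ B n, b.totalDegree ≤ 3 ^ n * d := by
    intro n
    induction n with
    | zero => simpa [hB0] using hFd
    | succ n ih =>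
      intro b hb
      rcases (hstep n b).mp hb with h | ⟨hb0, p, hp, q, hq, hrem⟩
      · exact (ih b h).trans (Nat.mul_le_mul_right d (Nat.pow_le_pow_right (by norm_num) (by omega)))
      · have h1 := remainder_totalDegree_le ord hgraded hrem
        have h2 := totalDegree_spoly_le ord p q
        have h3 := ih p hp
        have h4 := ih q hq
        have : 3 ^ (n + 1) * d = 3 ^ n * d + (3 ^ n * d + 3 ^ n * d) := by ring
        omega
  have hh1 : ∀ n, 1 ≤ 3 ^ n * d := fun n =>
    Nat.one_le_iff_ne_zero.mpr (by positivity)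
  have hhmono : Monotone fun n => 3 ^ n * d := fun a b hab =>
    Nat.mul_le_mul_right d (Nat.pow_le_pow_right (by norm_num) hab)
  rcases F.eq_empty_or_nonempty with hFe | ⟨f₀, hf₀⟩
  · -- F empty: then r = 0 and the trivial antichain works
    have hr : r = 0 := by
      by_contra hr
      have h01 : B 1 = B 0 := by
        ext b
        rw [hstep 0 b, hB0, hFe]
        simp
      have := hstrict 0 (by omega)
      rw [h01] at this
      exact lt_irrefl _ this
    subst hr
    exact hBd _ hh1 hhmono 1 (fun _ _ => 0)
      (fun i j hij => absurd hij (by omega))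
      (fun i => by simp [hh1])
  · -- F nonempty: build the antichain of leading monomials
    have hex : ∀ n, ∃ b, n < r → b ∈ B (n + 1) ∧ b ∉ B n := by
      intro n
      by_cases hn : n < r
      · by_contra hc
        push_neg at hc
        have heq : B (n + 1) = B n :=
          Finset.Subset.antisymm (fun b hb => by
            by_contra hbn
            exact hbn ((hc b).2 hb)) (hmono (Nat.le_succ n))
        have := hstrict n hn
        rw [heq] at this
        exact lt_irrefl _ this
      · exact ⟨0, fun h => absurd h hn⟩
    choose c hc using hex
    set bb : ℕ → MvPolynomial (Fin m) K := fun k => Nat.casesOn k f₀ c with hbb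
    have hbmem : ∀ k ≤ r, bb k ∈ B k := by
      intro k hk
      cases k with
      | zero => rw [hB0]; exact hf₀
      | succ k => exact (hc k (by omega)).1
    have hcstep : ∀ k < r, c k ≠ 0 ∧
        ∃ p ∈ B k, ∃ q ∈ B k, IsRemainder ord (spoly ord p q) (B k) (c k) := by
      intro k hk
      rcases (hstep k (c k)).mp (hc k hk).1 with h | h
      · exact absurd h (hc k hk).2
      · exact h
    have hbne : ∀ k ≤ r, bb k ≠ 0 := by
      intro k hk
      cases k with
      | zero => exact fun h0 => hF0 ((show f₀ = 0 from h0) ▸ hf₀)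
      | succ k => exact (hcstep k (by omega)).1
    refine hBd _ hh1 hhmono (r + 1) (fun i x => lmon ord (bb i.1) x) ?_ ?_
    · -- antichain property
      intro i j hij hle
      have hj1 : 1 ≤ j.1 := by
        have : i.1 < j.1 := hij
        omega
      obtain ⟨k, hk⟩ : ∃ k, j.1 = k + 1 := ⟨j.1 - 1, by omega⟩
      have hkr : k < r := by have := j.2; omega
      obtain ⟨p, -, q, -, a, -, -, hred⟩ := (hcstep k hkr).2
      have hik : i.1 ≤ k := by have : i.1 < j.1 := hij; omega
      have hgi : bb i.1 ∈ B k := hmono hik (hbmem i.1 (by omega))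
      have hgne : bb i.1 ≠ 0 := hbne i.1 (by omega)
      have hcne : c k ≠ 0 := (hcstep k hkr).1
      have hβ : lmon ord (c k) ∈ (c k).support := lmon_mem_support ord hcne
      refine hred (bb i.1) hgi hgne (lmon ord (c k)) hβ ?_
      rw [Finsupp.le_def]
      intro x
      have := hle x
      simpa [hk] using this
    · -- degree bounds
      intro i
      have h1 : (∑ x, lmon ord (bb i.1) x) ≤ (bb i.1).totalDegree := sum_lmon_le ord _
      have h2 : (bb i.1).totalDegree ≤ 3 ^ i.1 * d := hdeg i.1 _ (hbmem i.1 (by omega))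
      have h3 : 3 ^ i.1 * d ≤ 3 ^ (i.1 + 1) * d :=
        Nat.mul_le_mul_right d (Nat.pow_le_pow_right (by norm_num) (by omega))
      show (∑ x, lmon ord (bb i.1) x) ≤ 3 ^ (i.1 + 1) * d
      omega
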